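/- Let G be a finite group acting on a finite set X, and let [H_1], …, [H_r] be the distinct conjugacy classes of point stabilizers. For each i let N_i = N_G(H_i), U(H_i) = {[G_x]_{N_i} : x ∈ X, H_i ≤ G_x}, and κ_G(X) = |{i : |O_[H_i]| = 1}|. Then the relative rank of End_G(X) modulo Aut_G(X) satisfies Rank(End_G(X) : Aut_G(X)) = Σ_{i=1}^r |U(H_i)| − κ_G(X). -/

import Mathlib

/-- The monoid of all `G`-equivariant transformations of `X`, as a submonoid of
`Function.End X` (composition of functions). -/
def gEnd (G X : Type*) [Group G] [MulAction G X] : Submonoid (Function.End X) where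
  carrier := {f | ∀ (g : G) (x : X), f (g • x) = g • f x}
  one_mem' := fun _ _ => rfl
  mul_mem' := fun {f₁ f₂} h₁ h₂ g x => by
    show f₁ (f₂ (g • x)) = g • f₁ (f₂ x)
    rw [h₂, h₁]

/-- The group of all bijective `G`-equivariant transformations of `X`, as a subgroup of
`Equiv.Perm X`. -/
def gAut (G X : Type*) [Group G] [MulAction G X] : Subgroup (Equiv.Perm X) where
  carrier := {f | ∀ (g : G) (x : X), f (g • x) = g • f x}
  one_mem' := fun _ _ => rfl
  mul_mem' := fun {f₁ f₂} h₁ h₂ g x => by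
    show f₁ (f₂ (g • x)) = g • f₁ (f₂ x)
    rw [h₂, h₁]
  inv_mem' := fun {f} hf g x => f.injective (by
    rw [← Equiv.Perm.mul_apply, mul_inv_cancel, Equiv.Perm.one_apply, hf,
      ← Equiv.Perm.mul_apply, mul_inv_cancel, Equiv.Perm.one_apply])

/-- The conjugate subgroup `g K g⁻¹`. -/
def conjSub {G : Type*} [Group G] (g : G) (K : Subgroup G) : Subgroup G :=
  Subgroup.map (MulAut.conj g).toMonoidHom K

/-- The `N`-conjugacy class `[K]_N = {gKg⁻¹ : g ∈ N}` of a subgroup `K`. -/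
def nConjClass {G : Type*} [Group G] (N K : Subgroup G) : Set (Subgroup G) :=
  {L | ∃ n ∈ N, L = conjSub n K}

/-- The set `O_[H]` of `G`-orbits of `X` whose point stabilizers are conjugate to `H`. -/
def classOrbits (G X : Type*) [Group G] [MulAction G X] (H : Subgroup G) : Set (Set X) :=
  {s | ∃ y : X, (∃ g : G, MulAction.stabilizer G y = conjSub g H) ∧ s = MulAction.orbit G y}

/-- The set `U(H)` of `N_G(H)`-conjugacy classes of point stabilizers of `X` containing `H`. -/
def stabU (G X : Type*) [Group G] [MulAction G X] (H : Subgroup G) : Set (Set (Subgroup G)) :=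
  {C | ∃ x : X, H ≤ MulAction.stabilizer G x ∧
    C = nConjClass (Subgroup.normalizer (H : Set G)) (MulAction.stabilizer G x)}

/-- The elements of `Aut_G(X)` viewed as a set of transformations of `X`. -/
def autSet (G X : Type*) [Group G] [MulAction G X] : Set (Function.End X) :=
  (fun e : Equiv.Perm X => (e : X → X)) '' (gAut G X)

/-- The relative rank `Rank(T : N)` of a submonoid `T` modulo a set `N`: the least
cardinality of a set `W` with `⟨W ∪ N⟩ = T`. -/
noncomputable def relRank {M : Type*} [Monoid M] (T : Submonoid M) (N : Set M) : ℕ :=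
  sInf {n : ℕ | ∃ W : Finset M, W.card = n ∧ Submonoid.closure (↑W ∪ N) = T}

open MulAction

section Basics

variable {G X : Type*} [Group G] [MulAction G X]

lemma mem_gEnd_iff {f : Function.End X} :
    f ∈ gEnd G X ↔ ∀ (g : G) (x : X), f (g • x) = g • f x := Iff.rfl

lemma gEnd_apply_smul {f : Function.End X} (hf : f ∈ gEnd G X) (g : G) (x : X) :
    f (g • x) = g • f x := hf g x

lemma orbit_eq_of_mem {a b : X} (h : a ∈ orbit G b) : orbit G a = orbit G b := by
  obtain ⟨g, rfl⟩ := mem_orbit_iff.mp h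
  ext c
  constructor
  · rintro ⟨g', rfl⟩; exact ⟨g' * g, by simp [mul_smul]⟩
  · rintro ⟨g', rfl⟩; exact ⟨g' * g⁻¹, by simp [mul_smul]⟩

lemma smul_mem_orbit_iff {g : G} {z b : X} : g • z ∈ orbit G b ↔ z ∈ orbit G b := by
  constructor
  · intro h
    have := orbit_eq_of_mem h
    rw [← this]; exact ⟨g⁻¹, by simp⟩
  · intro h; obtain ⟨g', rfl⟩ := h; exact ⟨g * g', by simp [mul_smul]⟩

lemma stab_le_stab_apply {f : Function.End X} (hf : f ∈ gEnd G X) (x : X) :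
    stabilizer G x ≤ stabilizer G (f x) := by
  intro g hg
  have h1 : g • x = x := hg
  have : f (g • x) = g • f x := hf g x
  rw [h1] at this
  exact mem_stabilizer_iff.mpr this.symm

lemma stab_apply_eq_of_injOn {f : Function.End X} (hf : f ∈ gEnd G X) {x : X}
    (hinj : Set.InjOn f (orbit G x)) :
    stabilizer G (f x) = stabilizer G x := by
  refine le_antisymm (fun g hg => ?_) (stab_le_stab_apply hf x)
  have h1 : f (g • x) = f x := by
    rw [hf g x]; exact hg
  exact hinj (mem_orbit x g) (mem_orbit_self x) h1

lemma stab_apply_eq_of_inj {f : Function.End X} (hf : f ∈ gEnd G X)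
    (hinj : Function.Injective f) (x : X) :
    stabilizer G (f x) = stabilizer G x :=
  stab_apply_eq_of_injOn hf (hinj.injOn)

lemma injOn_orbit_of_stab_eq {f : Function.End X} (hf : f ∈ gEnd G X) {x : X}
    (h : stabilizer G (f x) = stabilizer G x) :
    Set.InjOn f (orbit G x) := by
  rintro _ ⟨g₁, rfl⟩ _ ⟨g₂, rfl⟩ heq
  rw [hf g₁ x, hf g₂ x] at heq
  have : (g₂⁻¹ * g₁) • f x = f x := by
    rw [mul_smul, heq]; simp
  have h2 : (g₂⁻¹ * g₁) ∈ stabilizer G x := h ▸ mem_stabilizer_iff.mpr this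
  have h3 : (g₂⁻¹ * g₁) • x = x := h2
  calc g₁ • x = g₂ • ((g₂⁻¹ * g₁) • x) := by simp [mul_smul]
  _ = g₂ • x := by rw [h3]

lemma image_orbit {f : Function.End X} (hf : f ∈ gEnd G X) (x : X) :
    f '' (orbit G x) = orbit G (f x) := by
  ext y
  constructor
  · rintro ⟨_, ⟨g, rfl⟩, rfl⟩
    rw [hf g x]; exact mem_orbit _ g
  · rintro ⟨g, rfl⟩
    exact ⟨g • x, mem_orbit x g, hf g x⟩

lemma mem_autSet_iff {a : Function.End X} :
    a ∈ autSet G X ↔ a ∈ gEnd G X ∧ Function.Bijective a := by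
  constructor
  · rintro ⟨e, he, rfl⟩
    exact ⟨he, e.bijective⟩
  · rintro ⟨ha, hb⟩
    refine ⟨Equiv.ofBijective a hb, ?_, rfl⟩
    intro g x
    exact ha g x

lemma autSet_subset_gEnd : autSet G X ⊆ (gEnd G X : Set (Function.End X)) :=
  fun _ h => (mem_autSet_iff.mp h).1

end Basics

section Conj

variable {G : Type*} [Group G]

lemma mem_conjSub {g a : G} {K : Subgroup G} :
    a ∈ conjSub g K ↔ ∃ k ∈ K, g * k * g⁻¹ = a := by
  simp [conjSub, Subgroup.mem_map, MulAut.conj_apply]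

lemma conjSub_one (K : Subgroup G) : conjSub 1 K = K := by
  ext a; simp [mem_conjSub]

lemma conjSub_conjSub (a b : G) (K : Subgroup G) :
    conjSub a (conjSub b K) = conjSub (a * b) K := by
  ext x
  simp only [mem_conjSub]
  constructor
  · rintro ⟨k, ⟨k', hk', rfl⟩, rfl⟩
    exact ⟨k', hk', by group⟩
  · rintro ⟨k, hk, rfl⟩
    exact ⟨b * k * b⁻¹, ⟨k, hk, rfl⟩, by group⟩

lemma coe_conjSub (g : G) (K : Subgroup G) :
    (conjSub g K : Set G) = (fun h => g * h * g⁻¹) '' (K : Set G) := by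
  ext a; simp [mem_conjSub]

lemma stab_smul {X : Type*} [MulAction G X] (g : G) (x : X) :
    MulAction.stabilizer G (g • x) = conjSub g (MulAction.stabilizer G x) :=
  MulAction.stabilizer_smul_eq_stabilizer_map_conj g x

lemma ncard_conjSub [Finite G] (g : G) (K : Subgroup G) :
    (conjSub g K : Set G).ncard = (K : Set G).ncard := by
  rw [coe_conjSub]
  exact Set.ncard_image_of_injective _ (fun a b hab => by
    have : g * a * g⁻¹ = g * b * g⁻¹ := hab
    group at this ⊢
    exact mul_left_cancel (mul_right_cancel this))

lemma eq_of_le_of_conj [Finite G] {K L : Subgroup G} (hle : K ≤ L) {g : G}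
    (h : L = conjSub g K) : L = K := by
  have h1 : (K : Set G) ⊆ (L : Set G) := hle
  have h2 : (L : Set G).ncard ≤ (K : Set G).ncard := by
    rw [h, ncard_conjSub]
  have := Set.eq_of_subset_of_ncard_le h1 h2 (Set.toFinite _)
  exact SetLike.coe_injective this.symm

lemma conjSub_of_mem_normalizer {H : Subgroup G} {n : G} (hn : n ∈ (Subgroup.normalizer (H : Set G))) :
    conjSub n H = H := by
  ext a
  rw [mem_conjSub]
  constructor
  · rintro ⟨k, hk, rfl⟩
    exact (Subgroup.mem_normalizer_iff.mp hn k).mp hk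
  · intro ha
    refine ⟨n⁻¹ * a * n, ?_, by group⟩
    refine (Subgroup.mem_normalizer_iff.mp hn (n⁻¹ * a * n)).mpr ?_
    have : n * (n⁻¹ * a * n) * n⁻¹ = a := by group
    rw [this]; exact ha

lemma self_mem_nConjClass (N K : Subgroup G) : K ∈ nConjClass N K :=
  ⟨1, N.one_mem, (conjSub_one K).symm⟩

lemma nConjClass_conj {N : Subgroup G} {n : G} (hn : n ∈ N) (K : Subgroup G) :
    nConjClass N (conjSub n K) = nConjClass N K := by
  ext L
  constructor
  · rintro ⟨m, hm, rfl⟩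
    exact ⟨m * n, N.mul_mem hm hn, (conjSub_conjSub m n K)⟩
  · rintro ⟨m, hm, rfl⟩
    exact ⟨m * n⁻¹, N.mul_mem hm (N.inv_mem hn), by
      rw [conjSub_conjSub]; simp⟩

lemma nConjClass_eq_iff {N K K' : Subgroup G} :
    nConjClass N K' = nConjClass N K ↔ ∃ n ∈ N, K' = conjSub n K := by
  constructor
  · intro h
    have : K' ∈ nConjClass N K := h ▸ self_mem_nConjClass N K'
    exact this
  · rintro ⟨n, hn, rfl⟩
    exact nConjClass_conj hn K

end Conj

section ElemSwap

open scoped Classical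

variable {G X : Type*} [Group G] [MulAction G X]

open MulAction

variable (G)

/-- The elementary equivariant map sending `g • p ↦ g • q` and fixing everything
outside the orbit of `p`. -/
noncomputable def elemFun (p q : X) : Function.End X := fun z =>
  if h : z ∈ orbit G p then (mem_orbit_iff.mp h).choose • q else z

/-- The swap map exchanging the orbits of `p` and `q` (or twisting, if they coincide). -/
noncomputable def swapFun (p q : X) : X → X := fun z =>
  if h : z ∈ orbit G p then (mem_orbit_iff.mp h).choose • q
  else if h' : z ∈ orbit G q then (mem_orbit_iff.mp h').choose • p
  else z

variable {G}

lemma elemFun_smul {p q : X} (hpq : stabilizer G p ≤ stabilizer G q) (g : G) :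
    elemFun G p q (g • p) = g • q := by
  have h : g • p ∈ orbit G p := mem_orbit p g
  simp only [elemFun, dif_pos h]
  have hgg : (mem_orbit_iff.mp h).choose • p = g • p := (mem_orbit_iff.mp h).choose_spec
  set g' := (mem_orbit_iff.mp h).choose
  have h1 : (g⁻¹ * g') • p = p := by rw [mul_smul, hgg]; simp
  have h3 : (g⁻¹ * g') • q = q := hpq h1
  calc g' • q = g • ((g⁻¹ * g') • q) := by simp [mul_smul]
  _ = g • q := by rw [h3]

lemma elemFun_apply_self {p q : X} (hpq : stabilizer G p ≤ stabilizer G q) :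
    elemFun G p q p = q := by
  have := elemFun_smul hpq (1 : G)
  simpa using this

lemma elemFun_of_not_mem {p q z : X} (h : z ∉ orbit G p) : elemFun G p q z = z :=
  dif_neg h

lemma elemFun_mem_gEnd {p q : X} (hpq : stabilizer G p ≤ stabilizer G q) :
    elemFun G p q ∈ gEnd G X := by
  intro g z
  by_cases h : z ∈ orbit G p
  · obtain ⟨g₀, rfl⟩ := mem_orbit_iff.mp h
    rw [← mul_smul, elemFun_smul hpq, elemFun_smul hpq, mul_smul]
  · rw [elemFun_of_not_mem h, elemFun_of_not_mem (fun hc => h (smul_mem_orbit_iff.mp hc))]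

lemma swapFun_smul_p {p q : X} (hpq : stabilizer G p = stabilizer G q) (g : G) :
    swapFun G p q (g • p) = g • q := by
  have h : g • p ∈ orbit G p := mem_orbit p g
  simp only [swapFun, dif_pos h]
  have hgg : (mem_orbit_iff.mp h).choose • p = g • p := (mem_orbit_iff.mp h).choose_spec
  set g' := (mem_orbit_iff.mp h).choose
  have h1 : (g⁻¹ * g') • p = p := by rw [mul_smul, hgg]; simp
  have h3 : (g⁻¹ * g') • q = q := hpq.le h1
  calc g' • q = g • ((g⁻¹ * g') • q) := by simp [mul_smul]
  _ = g • q := by rw [h3]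

lemma swapFun_smul_q {p q : X} (hpq : stabilizer G p = stabilizer G q)
    (hne : q ∉ orbit G p) (g : G) :
    swapFun G p q (g • q) = g • p := by
  have h : g • q ∉ orbit G p := fun hc => hne (smul_mem_orbit_iff.mp hc)
  have h' : g • q ∈ orbit G q := mem_orbit q g
  simp only [swapFun, dif_neg h, dif_pos h']
  have hgg : (mem_orbit_iff.mp h').choose • q = g • q := (mem_orbit_iff.mp h').choose_spec
  set g' := (mem_orbit_iff.mp h').choose
  have h1 : (g⁻¹ * g') • q = q := by rw [mul_smul, hgg]; simp
  have h3 : (g⁻¹ * g') • p = p := hpq.ge h1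
  calc g' • p = g • ((g⁻¹ * g') • p) := by simp [mul_smul]
  _ = g • p := by rw [h3]

lemma swapFun_of_not_mem {p q z : X} (h : z ∉ orbit G p) (h' : z ∉ orbit G q) :
    swapFun G p q z = z := by
  simp only [swapFun, dif_neg h, dif_neg h']

lemma swapFun_leftInverse {p q : X} (hpq : stabilizer G p = stabilizer G q) :
    Function.LeftInverse (swapFun G q p) (swapFun G p q) := by
  intro z
  by_cases h : z ∈ orbit G p
  · obtain ⟨g, rfl⟩ := mem_orbit_iff.mp h
    rw [swapFun_smul_p hpq]
    exact swapFun_smul_p hpq.symm g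
  · by_cases h' : z ∈ orbit G q
    · obtain ⟨g, rfl⟩ := mem_orbit_iff.mp h'
      have hq : q ∈ orbit G q := mem_orbit_self q
      have hqp : q ∉ orbit G p := by
        intro hc
        rw [orbit_eq_of_mem hc] at h'
        exact h h'
      have hpq' : p ∉ orbit G q := by
        intro hc
        exact hqp (MulAction.mem_orbit_symm.mp hc)
      rw [swapFun_smul_q hpq hqp]
      exact swapFun_smul_q hpq.symm hpq' g
    · rw [swapFun_of_not_mem h h', swapFun_of_not_mem h' h]

/-- The swap automorphism. -/
noncomputable def swapPerm (p q : X) (hpq : stabilizer G p = stabilizer G q) :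
    Equiv.Perm X :=
  ⟨swapFun G p q, swapFun G q p, swapFun_leftInverse hpq, swapFun_leftInverse hpq.symm⟩

lemma swapPerm_mem_gAut {p q : X} (hpq : stabilizer G p = stabilizer G q) :
    swapPerm p q hpq ∈ gAut G X := by
  intro g z
  show swapFun G p q (g • z) = g • swapFun G p q z
  by_cases h : z ∈ orbit G p
  · obtain ⟨g₀, rfl⟩ := mem_orbit_iff.mp h
    rw [← mul_smul, swapFun_smul_p hpq, swapFun_smul_p hpq, mul_smul]
  · by_cases h' : z ∈ orbit G q
    · obtain ⟨g₀, rfl⟩ := mem_orbit_iff.mp h'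
      have hqp : q ∉ orbit G p := by
        intro hc
        rw [orbit_eq_of_mem hc] at h'
        exact h h'
      rw [← mul_smul, swapFun_smul_q hpq hqp, swapFun_smul_q hpq hqp, mul_smul]
    · rw [swapFun_of_not_mem h h',
        swapFun_of_not_mem (fun hc => h (smul_mem_orbit_iff.mp hc))
          (fun hc => h' (smul_mem_orbit_iff.mp hc))]

lemma coe_swapPerm_mem_autSet {p q : X} (hpq : stabilizer G p = stabilizer G q) :
    (swapPerm p q hpq : X → X) ∈ autSet G X :=
  ⟨swapPerm p q hpq, swapPerm_mem_gAut hpq, rfl⟩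

lemma swapPerm_apply_self {p q : X} (hpq : stabilizer G p = stabilizer G q) :
    swapPerm p q hpq p = q := by
  show swapFun G p q p = q
  have := swapFun_smul_p hpq (1 : G)
  simpa using this

lemma swapPerm_apply_of_not_mem {p q z : X} (hpq : stabilizer G p = stabilizer G q)
    (h : z ∉ orbit G p) (h' : z ∉ orbit G q) : swapPerm p q hpq z = z :=
  swapFun_of_not_mem h h'

/-- Existence of an automorphism with two prescribed values. -/
lemma swap2 {u u' v v' : X} (hu : stabilizer G u = stabilizer G u')
    (hv : stabilizer G v = stabilizer G v')
    (huv : v ∉ orbit G u) (huv' : v' ∉ orbit G u') :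
    ∃ b : Equiv.Perm X, b ∈ gAut G X ∧ b u = u' ∧ b v = v' := by
  set c₁ := swapPerm u u' hu with hc₁
  have hc₁v : stabilizer G (c₁ v) = stabilizer G v := by
    have h1 : (c₁ : X → X) ∈ gEnd G X := (swapPerm_mem_gAut hu)
    exact stab_apply_eq_of_inj h1 c₁.injective v
  set c₂ := swapPerm (c₁ v) v' (hc₁v.trans hv) with hc₂
  refine ⟨c₂ * c₁, Subgroup.mul_mem _ (swapPerm_mem_gAut _) (swapPerm_mem_gAut hu), ?_, ?_⟩
  · show c₂ (c₁ u) = u'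
    have h1 : c₁ u = u' := swapPerm_apply_self hu
    rw [h1]
    -- need u' ∉ orbit (c₁ v) and u' ∉ orbit v'
    have hu'v' : u' ∉ orbit G v' := fun hc => huv' (MulAction.mem_orbit_symm.mp hc)
    have hu'c : u' ∉ orbit G (c₁ v) := by
      by_cases hvu' : v ∈ orbit G u'
      · -- c₁ v ∈ orbit u
        have hvnu : v ∉ orbit G u := huv
        have : orbit G u ≠ orbit G u' := by
          intro he
          rw [he] at hvnu; exact hvnu hvu'
        -- c₁ v = swapFun u u' v with v ∈ orbit u' \ orbit u
        obtain ⟨g, rfl⟩ := mem_orbit_iff.mp hvu'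
        have : c₁ (g • u') = g • u := swapFun_smul_q hu (fun hc => this (orbit_eq_of_mem hc).symm) g
        rw [this]
        intro hc
        -- u' ∈ orbit (g • u) = orbit u, so orbit u = orbit u', contradiction
        have h2 : u' ∈ orbit G u := by
          have := orbit_eq_of_mem (mem_orbit u g)
          rw [← this]; exact hc
        have h3 : g • u' ∈ orbit G u := by
          rw [orbit_eq_of_mem h2] at *
          exact smul_mem_orbit_iff.mpr h2
        exact huv (by rw [← orbit_eq_of_mem h2] at h3 ⊢; exact h3)
      · have h1 : c₁ v = v := swapPerm_apply_of_not_mem hu huv hvu'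
        rw [h1]
        intro hc
        exact hvu' (MulAction.mem_orbit_symm.mp hc)
    exact swapPerm_apply_of_not_mem _ hu'c hu'v'
  · show c₂ (c₁ v) = v'
    exact swapPerm_apply_self _

end ElemSwap

section OrbitQuot

variable {G X : Type*} [Group G] [MulAction G X]

open MulAction

/-- Orbit space. -/
abbrev Om (G X : Type*) [Group G] [MulAction G X] := orbitRel.Quotient G X

/-- Class of a point in the orbit space. -/
abbrev mkQ : X → Om G X := Quotient.mk''

lemma mkQ_eq_iff {a b : X} : (mkQ a : Om G X) = mkQ b ↔ a ∈ orbit G b :=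
  Quotient.eq''.trans MulAction.orbitRel_apply

lemma orbit_eq_of_mkQ_eq {a b : X} (h : (mkQ a : Om G X) = mkQ b) :
    orbit G a = orbit G b :=
  orbit_eq_of_mem (mkQ_eq_iff.mp h)

lemma stab_conj_of_mem_orbit {a b : X} (h : a ∈ orbit G b) :
    ∃ g : G, stabilizer G a = conjSub g (stabilizer G b) := by
  obtain ⟨g, rfl⟩ := mem_orbit_iff.mp h
  exact ⟨g, stab_smul g b⟩

/-- The map on orbit spaces induced by an equivariant map. -/
noncomputable def phiQ {f : Function.End X} (hf : f ∈ gEnd G X) : Om G X → Om G X :=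
  Quotient.map' f (fun a b hab => by
    rw [MulAction.orbitRel_apply] at *
    obtain ⟨g, rfl⟩ := mem_orbit_iff.mp hab
    rw [hf g b]
    exact mem_orbit _ g)

lemma phiQ_mkQ {f : Function.End X} (hf : f ∈ gEnd G X) (z : X) :
    phiQ hf (mkQ z) = mkQ (f z) := rfl

/-- The full conjugacy class of a stabilizer of an orbit. -/
noncomputable def clsQ : Om G X → Set (Subgroup G) :=
  fun q => Quotient.liftOn' q (fun z => nConjClass ⊤ (stabilizer G z)) (by
    intro a b hab
    rw [MulAction.orbitRel_apply] at hab
    obtain ⟨g, hg⟩ := stab_conj_of_mem_orbit hab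
    show nConjClass ⊤ (stabilizer G a) = nConjClass ⊤ (stabilizer G b)
    rw [hg]
    exact nConjClass_conj (Subgroup.mem_top g) _)

lemma clsQ_mkQ (z : X) : clsQ (mkQ z : Om G X) = nConjClass ⊤ (stabilizer G z) := rfl

/-- Merge lemma: an equivariant map which is injective and stabilizer-preserving away
from the orbit of `x` either merges the orbit of `x` into the image of another orbit,
or preserves the conjugacy class of the stabilizer of `x`. -/
lemma merge_or_conj [Finite X] {f : Function.End X} (hf : f ∈ gEnd G X) (x : X)
    (hinj : Set.InjOn f (orbit G x)ᶜ)
    (hstab : ∀ z, z ∉ orbit G x → stabilizer G (f z) = stabilizer G z) :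
    (∃ z, z ∉ orbit G x ∧ orbit G (f z) = orbit G (f x)) ∨
      ∃ g, stabilizer G (f x) = conjSub g (stabilizer G x) := by
  by_contra hcon
  push_neg at hcon
  obtain ⟨hm, hc⟩ := hcon
  set T : Set (Om G X) := {q | clsQ q = clsQ (mkQ (f x))} with hT
  -- points of orbits in T avoid orbit of x
  have hTx : ∀ z : X, (mkQ z : Om G X) ∈ T → z ∉ orbit G x := by
    intro z hz hzx
    obtain ⟨g, hg⟩ := stab_conj_of_mem_orbit hzx
    -- clsQ (mkQ z) = clsQ (mkQ (f x)), so stab (f x) conj to stab z conj to stab x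
    have h1 : nConjClass ⊤ (stabilizer G z) = nConjClass ⊤ (stabilizer G (f x)) := hz
    have h2 : stabilizer G (f x) ∈ nConjClass ⊤ (stabilizer G z) :=
      h1 ▸ self_mem_nConjClass ⊤ _
    obtain ⟨n, _, hn⟩ := h2
    rw [hg, conjSub_conjSub] at hn
    exact hc _ hn
  have hmaps : Set.MapsTo (phiQ hf) T T := by
    rintro q hq
    induction q using Quotient.inductionOn' with
    | h z =>
      have hz := hTx z hq
      show clsQ (phiQ hf (mkQ z)) = _
      rw [phiQ_mkQ, clsQ_mkQ, hstab z hz]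
      exact hq
  have hinjT : Set.InjOn (phiQ hf) T := by
    rintro q₁ hq₁ q₂ hq₂ he
    induction q₁ using Quotient.inductionOn' with
    | h z₁ =>
      induction q₂ using Quotient.inductionOn' with
      | h z₂ =>
        rw [phiQ_mkQ, phiQ_mkQ] at he
        have h1 : f z₁ ∈ orbit G (f z₂) := mkQ_eq_iff.mp he
        obtain ⟨g, hg⟩ := mem_orbit_iff.mp h1
        rw [← hf g z₂] at hg
        have h2 : z₁ ∉ orbit G x := hTx z₁ hq₁
        have h3 : g • z₂ ∉ orbit G x := fun hc' =>
          hTx z₂ hq₂ (smul_mem_orbit_iff.mp hc')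
        have := hinj h3 h2 hg
        rw [mkQ_eq_iff, ← this]
        exact mem_orbit _ g
  have hfin : T.Finite := Set.toFinite _
  have hbij := (hfin.injOn_iff_bijOn_of_mapsTo hmaps).mp hinjT
  have hfxT : (mkQ (f x) : Om G X) ∈ T := rfl
  obtain ⟨q, hq, hqe⟩ := hbij.surjOn hfxT
  induction q using Quotient.inductionOn' with
  | h z =>
    rw [phiQ_mkQ] at hqe
    exact hm z (hTx z hq) (orbit_eq_of_mkQ_eq hqe)

end OrbitQuot

section Lower

variable {G X : Type*} [Group G] [MulAction G X]

open MulAction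

lemma end_mul_apply (f g : Function.End X) (z : X) : (f * g) z = f (g z) := rfl

/-- `w` *serves* the pair `(H, C)`. -/
def Serve (H : Subgroup G) (C : Set (Subgroup G)) (w : Function.End X) : Prop :=
  w ∈ gEnd G X ∧ ¬ Function.Injective w ∧
  ∃ x : X, stabilizer G x = H ∧
    nConjClass (Subgroup.normalizer (H : Set G)) (stabilizer G (w x)) = C ∧
    Set.InjOn w (orbit G x)ᶜ ∧
    ∀ z, z ∉ orbit G x → stabilizer G (w z) = stabilizer G z

/-- Witness property for the pair `(H, C)` at the point `x`. -/
def Wit (f : Function.End X) (x : X) (H : Subgroup G) (C : Set (Subgroup G)) : Prop :=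
  stabilizer G x = H ∧
  nConjClass (Subgroup.normalizer (H : Set G)) (stabilizer G (f x)) = C ∧
  ¬ Function.Injective f ∧
  Set.InjOn f (orbit G x)ᶜ ∧
  ∀ z, z ∉ orbit G x → stabilizer G (f z) = stabilizer G z

lemma orbit_subset_compl {x z : X} (h : z ∉ orbit G x) :
    orbit G z ⊆ (orbit G x)ᶜ := by
  intro w hw hwx
  exact h ((orbit_eq_of_mem hwx) ▸ (MulAction.mem_orbit_symm.mp hw))

/-- A non-injective first factor of a witness serves the pair. -/
lemma serve_of_factor [Finite G] [Finite X] {c g : Function.End X}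
    (hc : c ∈ gEnd G X) (hg : g ∈ gEnd G X) (hcnj : ¬ Function.Injective c)
    {x : X} {H : Subgroup G} {C : Set (Subgroup G)}
    (hw : Wit (g * c) x H C) : Serve H C c := by
  obtain ⟨hsx, hcls, hfnj, hfinj, hfstab⟩ := hw
  have hcinj : Set.InjOn c (orbit G x)ᶜ := by
    intro z₁ h₁ z₂ h₂ he
    exact hfinj h₁ h₂ (by rw [end_mul_apply, end_mul_apply, he])
  have hcstab : ∀ z, z ∉ orbit G x → stabilizer G (c z) = stabilizer G z := by
    intro z hz
    refine le_antisymm ?_ (stab_le_stab_apply hc z)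
    have h1 : stabilizer G (c z) ≤ stabilizer G (g (c z)) := stab_le_stab_apply hg (c z)
    have h2 : stabilizer G (g (c z)) = stabilizer G z := hfstab z hz
    rw [← h2]; exact h1
  refine ⟨hc, hcnj, x, hsx, ?_, hcinj, hcstab⟩
  by_cases hmerge : ∃ z, z ∉ orbit G x ∧ orbit G (c z) = orbit G (c x)
  · obtain ⟨z, hz, hoz⟩ := hmerge
    -- g is injective on orbit (c z) = orbit (c x)
    have hginj : Set.InjOn g (orbit G (c x)) := by
      rw [← hoz, ← image_orbit hc z]
      rintro _ ⟨u₁, hu₁, rfl⟩ _ ⟨u₂, hu₂, rfl⟩ he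
      have h₁ : u₁ ∈ (orbit G x)ᶜ := orbit_subset_compl hz hu₁
      have h₂ : u₂ ∈ (orbit G x)ᶜ := orbit_subset_compl hz hu₂
      have : u₁ = u₂ := hfinj h₁ h₂ he
      rw [this]
    have : stabilizer G (g (c x)) = stabilizer G (c x) :=
      stab_apply_eq_of_injOn hg hginj
    rw [← this]
    exact hcls
  · exfalso
    push_neg at hmerge
    rcases merge_or_conj hc x hcinj hcstab with h | ⟨g₀, hg₀⟩
    · obtain ⟨z, hz, he⟩ := h
      exact hmerge z hz he
    · -- stab (c x) = stab x, so c is injective: contradiction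
      have h1 : stabilizer G x ≤ stabilizer G (c x) := stab_le_stab_apply hc x
      have h2 : stabilizer G (c x) = stabilizer G x := eq_of_le_of_conj h1 hg₀
      have h3 : Set.InjOn c (orbit G x) := injOn_orbit_of_stab_eq hc h2
      apply hcnj
      intro u v he
      by_cases hu : u ∈ orbit G x <;> by_cases hv : v ∈ orbit G x
      · exact h3 hu hv he
      · exfalso
        refine hmerge v hv ?_
        have hcu : c u ∈ orbit G (c x) := by
          rw [← image_orbit hc x]; exact ⟨u, hu, rfl⟩
        rw [← he] at *
        exact (orbit_eq_of_mem hcu)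
      · exfalso
        refine hmerge u hu ?_
        have hcv : c v ∈ orbit G (c x) := by
          rw [← image_orbit hc x]; exact ⟨v, hv, rfl⟩
        rw [he] at *
        exact (orbit_eq_of_mem hcv)
      · exact hcinj hu hv he

/-- Witness transfer across an injective first factor. -/
lemma wit_comp_inj [Finite X] {c g : Function.End X}
    (hc : c ∈ gEnd G X) (hg : g ∈ gEnd G X) (hcinj : Function.Injective c)
    {x : X} {H : Subgroup G} {C : Set (Subgroup G)}
    (hw : Wit (g * c) x H C) : Wit g (c x) H C := by
  obtain ⟨hsx, hcls, hfnj, hfinj, hfstab⟩ := hw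
  have hcbij : Function.Bijective c := Finite.injective_iff_bijective.mp hcinj
  have hstabc : ∀ z : X, stabilizer G (c z) = stabilizer G z :=
    fun z => stab_apply_eq_of_inj hc hcinj z
  have horb : ∀ z : X, c z ∈ orbit G (c x) ↔ z ∈ orbit G x := by
    intro z
    constructor
    · rintro ⟨g', hg'⟩
      have hg2 : c (g' • x) = c z := by rw [hc g' x]; exact hg'
      have := hcinj hg2
      rw [← this]; exact mem_orbit x g'
    · rintro ⟨g', rfl⟩
      rw [hc g' x]; exact mem_orbit _ g'
  refine ⟨(hstabc x).trans hsx, hcls, ?_, ?_, ?_⟩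
  · intro hginj
    exact hfnj (by
      intro u v he
      exact hcbij.1 (hginj (by rw [end_mul_apply, end_mul_apply] at he; exact he)))
  · intro z₁ h₁ z₂ h₂ he
    obtain ⟨u₁, rfl⟩ := hcbij.2 z₁
    obtain ⟨u₂, rfl⟩ := hcbij.2 z₂
    have hu₁ : u₁ ∈ (orbit G x)ᶜ := fun hmem => h₁ ((horb u₁).mpr hmem)
    have hu₂ : u₂ ∈ (orbit G x)ᶜ := fun hmem => h₂ ((horb u₂).mpr hmem)
    have : u₁ = u₂ := hfinj hu₁ hu₂ he
    rw [this]
  · intro z hz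
    obtain ⟨u, rfl⟩ := hcbij.2 z
    have hu : u ∉ orbit G x := fun hmem => hz ((horb u).mpr hmem)
    rw [hstabc u]
    exact hfstab u hu

/-- Lower bound core: any factorization of a witness contains a serving generator. -/
lemma exists_serve_of_list [Finite G] [Finite X] {W : Finset (Function.End X)}
    (hW : (W : Set (Function.End X)) ⊆ (gEnd G X : Set (Function.End X)))
    (L : List (Function.End X))
    (hL : ∀ c ∈ L, c ∈ (W : Set (Function.End X)) ∪ autSet G X) :
    ∀ (x : X) (H : Subgroup G) (C : Set (Subgroup G)),
      Wit (L.prod) x H C → ∃ w ∈ W, Serve H C w := by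
  induction L using List.reverseRecOn with
  | nil =>
    intro x H C hw
    exact absurd (fun u v h => h) hw.2.2.1
  | append_singleton L c ih =>
    intro x H C hw
    have hcmem : c ∈ (W : Set (Function.End X)) ∪ autSet G X := hL c (by simp)
    have hLmem : ∀ d ∈ L, d ∈ (W : Set (Function.End X)) ∪ autSet G X :=
      fun d hd => hL d (by simp [hd])
    have hcE : c ∈ gEnd G X := by
      rcases hcmem with h | h
      · exact hW h
      · exact autSet_subset_gEnd h
    have hgE : L.prod ∈ gEnd G X := by
      refine Submonoid.list_prod_mem _ (fun d hd => ?_)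
      rcases hLmem d hd with h | h
      · exact hW h
      · exact autSet_subset_gEnd h
    rw [List.prod_append, List.prod_singleton] at hw
    by_cases hcinj : Function.Injective c
    · exact ih hLmem (c x) H C (wit_comp_inj hcE hgE hcinj hw)
    · have hcW : c ∈ W := by
        rcases hcmem with h | h
        · exact h
        · exact absurd ((mem_autSet_iff.mp h).2.injective) hcinj
      exact ⟨c, hcW, serve_of_factor hcE hgE hcinj hw⟩

end Lower

section Excl

variable {G X : Type*} [Group G] [MulAction G X]

open MulAction

lemma conj_shift {G : Type*} [Group G] {K K' : Subgroup G} {g g' : G}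
    (h : conjSub g K = conjSub g' K') : K' = conjSub (g'⁻¹ * g) K := by
  have : conjSub g'⁻¹ (conjSub g K) = conjSub g'⁻¹ (conjSub g' K') := by rw [h]
  rw [conjSub_conjSub, conjSub_conjSub] at this
  simpa [conjSub_one] using this.symm

lemma mem_normalizer_of_conj {G : Type*} [Group G] {K : Subgroup G} {g : G}
    (h : conjSub g K = K) : g ∈ (Subgroup.normalizer (K : Set G)) := by
  rw [Subgroup.mem_normalizer_iff]
  intro k
  constructor
  · intro hk
    rw [← h]
    exact mem_conjSub.mpr ⟨k, hk, rfl⟩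
  · intro hk
    rw [← h] at hk
    obtain ⟨k', hk', he⟩ := mem_conjSub.mp hk
    have h2 : k' = k := mul_left_cancel (mul_right_cancel he)
    rw [← h2]; exact hk'

lemma stab_apply_smul {w : Function.End X} (hw : w ∈ gEnd G X) (g : G) (z : X) :
    stabilizer G (w (g • z)) = conjSub g (stabilizer G (w z)) := by
  rw [hw g z, stab_smul]

variable {r : ℕ} {H : Fin r → Subgroup G}

lemma uniq_idx (hH1 : ∀ i, ∃ x : X, stabilizer G x = H i)
    (hH2 : ∀ x : X, ∃! i, ∃ g : G, stabilizer G x = conjSub g (H i))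
    {i i' : Fin r} (h : ∃ g : G, H i' = conjSub g (H i)) : i = i' := by
  obtain ⟨p, hp⟩ := hH1 i'
  obtain ⟨j, _, hj⟩ := hH2 p
  have h1 : j = i' := (hj i' ⟨1, by rw [hp, conjSub_one]⟩).symm
  obtain ⟨g, hg⟩ := h
  have h2 : j = i := (hj i ⟨g, by rw [hp, hg]⟩).symm
  rw [← h1, ← h2]

lemma serve_exclusive [Finite G] [Finite X]
    (hH1 : ∀ i, ∃ x : X, stabilizer G x = H i)
    (hH2 : ∀ x : X, ∃! i, ∃ g : G, stabilizer G x = conjSub g (H i))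
    {w : Function.End X} {i i' : Fin r} {C C' : Set (Subgroup G)}
    (h : Serve (H i) C w) (h' : Serve (H i') C' w) : i = i' ∧ C = C' := by
  obtain ⟨hwE, hwnj, x, hsx, hcls, hinj, hstab⟩ := h
  obtain ⟨-, -, x', hsx', hcls', hinj', hstab'⟩ := h'
  by_cases horb : orbit G x = orbit G x'
  · -- same orbit
    have hx' : x' ∈ orbit G x := by rw [horb]; exact mem_orbit_self x'
    obtain ⟨g, rfl⟩ := mem_orbit_iff.mp hx'
    have h1 : H i' = conjSub g (H i) := by
      rw [← hsx', ← hsx, stab_smul]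
    have hii : i = i' := uniq_idx hH1 hH2 ⟨g, h1⟩
    refine ⟨hii, ?_⟩
    subst hii
    have hgN : g ∈ (Subgroup.normalizer ((H i) : Set G)) := mem_normalizer_of_conj (by rw [← h1])
    rw [← hcls', stab_apply_smul hwE, nConjClass_conj hgN, hcls]
  · -- different orbits
    have hx'c : x' ∉ orbit G x := fun hc => horb (orbit_eq_of_mem hc).symm
    have hxc : x ∉ orbit G x' := fun hc => horb (orbit_eq_of_mem hc)
    have e1 : stabilizer G (w x') = H i' := by rw [hstab x' hx'c, hsx']
    have e2 : stabilizer G (w x) = H i := by rw [hstab' x hxc, hsx]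
    have hC : C = nConjClass (Subgroup.normalizer ((H i) : Set G)) (H i) := by rw [← hcls, e2]
    have hC' : C' = nConjClass (Subgroup.normalizer ((H i') : Set G)) (H i') := by rw [← hcls', e1]
    -- find the merge pair for x'
    obtain ⟨p, q, hpq, hne⟩ := Function.not_injective_iff.mp hwnj
    have hwinj' : Set.InjOn w (orbit G x') :=
      injOn_orbit_of_stab_eq hwE (by rw [e1, hsx'])
    have hmix : (p ∈ orbit G x' ∧ q ∉ orbit G x') ∨ (q ∈ orbit G x' ∧ p ∉ orbit G x') := by
      by_cases hp : p ∈ orbit G x' <;> by_cases hq : q ∈ orbit G x'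
      · exact absurd (hwinj' hp hq hpq) hne
      · exact Or.inl ⟨hp, hq⟩
      · exact Or.inr ⟨hq, hp⟩
      · exact absurd (hinj' hp hq hpq) hne
    -- wlog u' ∈ orbit x', v' ∉ orbit x', w u' = w v'
    obtain ⟨u', v', hu', hv', huv⟩ :
        ∃ u' v', u' ∈ orbit G x' ∧ v' ∉ orbit G x' ∧ w u' = w v' := by
      rcases hmix with ⟨h1, h2⟩ | ⟨h1, h2⟩
      · exact ⟨p, q, h1, h2, hpq⟩
      · exact ⟨q, p, h1, h2, hpq.symm⟩
    have hv'x : v' ∈ orbit G x := by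
      by_contra hv'x
      have hu'x : u' ∉ orbit G x := by
        intro hc
        exact horb ((orbit_eq_of_mem hc).symm.trans (orbit_eq_of_mem hu'))
      have : u' = v' := hinj hu'x hv'x huv
      rw [this] at hu'
      exact hv' hu'
    obtain ⟨g₁, rfl⟩ := mem_orbit_iff.mp hu'
    obtain ⟨g₀, rfl⟩ := mem_orbit_iff.mp hv'x
    have s1 : stabilizer G (w (g₁ • x')) = conjSub g₁ (H i') := by
      rw [stab_apply_smul hwE, e1]
    have s2 : stabilizer G (w (g₀ • x)) = conjSub g₀ (H i) := by
      rw [hstab' _ hv', stab_smul, hsx]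
    rw [huv, s2] at s1
    have hii : i = i' := uniq_idx hH1 hH2 ⟨g₁⁻¹ * g₀, conj_shift s1⟩
    refine ⟨hii, ?_⟩
    rw [hC, hC', hii]

end Excl

section Upper

open scoped Classical

variable {G X : Type*} [Group G] [MulAction G X]

open MulAction

lemma end_pow_apply (f : Function.End X) (n : ℕ) (z : X) : (f ^ n) z = f^[n] z := by
  induction n generalizing z with
  | zero => rfl
  | succ n ih =>
    rw [pow_succ, Function.iterate_succ_apply (f := f)]
    exact ih (f z)

lemma stab_le_stab_iterate {f : Function.End X} (hf : f ∈ gEnd G X) (k : ℕ) (z : X) :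
    stabilizer G z ≤ stabilizer G (f^[k] z) := by
  induction k generalizing z with
  | zero => exact le_rfl
  | succ k ih =>
    rw [Function.iterate_succ_apply (f := f)]
    exact le_trans (stab_le_stab_apply hf z) (ih (f z))

/-- Non-identity orbits of an endomorphism. -/
def SS (f : Function.End X) : Set (Om G X) := {q | ∃ z : X, mkQ z = q ∧ f z ≠ z}

lemma mkQ_iterate {f : Function.End X} (hf : f ∈ gEnd G X) (m : ℕ) (z : X) :
    (mkQ (f^[m] z) : Om G X) = (phiQ hf)^[m] (mkQ z) := by
  induction m generalizing z with
  | zero => rfl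
  | succ m ih =>
    rw [Function.iterate_succ_apply (f := f), Function.iterate_succ_apply, phiQ_mkQ hf]
    exact ih (f z)

/-- Step A: if all elementary maps lie in a submonoid containing all automorphisms,
then every equivariant map lies in it. -/
lemma mem_of_elem_mem [Finite X] {M : Submonoid (Function.End X)}
    (hauts : autSet G X ⊆ (M : Set (Function.End X)))
    (helem : ∀ p q : X, stabilizer G p ≤ stabilizer G q → elemFun G p q ∈ M) :
    ∀ (n : ℕ) (f : Function.End X), f ∈ gEnd G X → (SS (G := G) f).ncard ≤ n → f ∈ M := by
  intro n
  induction n with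
  | zero =>
    intro f hf hcard
    have hempty : SS (G := G) f = ∅ := by
      rw [← Set.ncard_eq_zero (Set.toFinite _)]
      omega
    have : f = 1 := by
      funext z
      by_contra hz
      have : (mkQ z : Om G X) ∈ SS (G := G) f := ⟨z, rfl, hz⟩
      rw [hempty] at this
      exact this
    rw [this]; exact M.one_mem
  | succ n ih =>
    intro f hf hcard
    by_cases hS : SS (G := G) f = ∅
    · exact ih f hf (by rw [hS]; simp)
    by_cases hA : ∃ q ∈ SS (G := G) f, phiQ hf q ∉ SS (G := G) f
    · -- peel an elementary map
      obtain ⟨q, hq, hq'⟩ := hA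
      obtain ⟨z₀, hz₀, hfz₀⟩ := hq
      subst hz₀
      have hfix : ∀ u : X, (mkQ u : Om G X) = phiQ hf (mkQ z₀) → f u = u := by
        intro u hu
        by_contra hne
        exact hq' ⟨u, hu, hne⟩
      have hqne : phiQ hf (mkQ z₀) ≠ (mkQ z₀ : Om G X) := by
        intro he
        apply hq'
        rw [he]
        exact ⟨z₀, rfl, hfz₀⟩
      set f'' : Function.End X := fun z => if z ∈ orbit G z₀ then z else f z with hf''
      have hf''E : f'' ∈ gEnd G X := by
        intro g z
        by_cases hz : z ∈ orbit G z₀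
        · simp only [hf'', if_pos hz, if_pos (smul_mem_orbit_iff.mpr hz)]
        · simp only [hf'', if_neg hz, if_neg (fun hc => hz (smul_mem_orbit_iff.mp hc))]
          exact hf g z
      have hfe : f = f'' * elemFun G z₀ (f z₀) := by
        funext z
        rw [end_mul_apply]
        by_cases hz : z ∈ orbit G z₀
        · obtain ⟨g, rfl⟩ := mem_orbit_iff.mp hz
          rw [elemFun_smul (stab_le_stab_apply hf z₀)]
          have h1 : g • f z₀ ∉ orbit G z₀ := by
            intro hc
            refine hqne ?_
            rw [phiQ_mkQ hf, mkQ_eq_iff]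
            exact smul_mem_orbit_iff.mp hc
          have h2 : f (f z₀) = f z₀ := hfix (f z₀) (phiQ_mkQ hf z₀).symm
          simp only [hf'', if_neg h1]
          rw [hf g (f z₀), h2, hf g z₀]
        · rw [elemFun_of_not_mem hz]
          simp only [hf'', if_neg hz]
      have hsub : SS (G := G) f'' ⊆ SS (G := G) f \ {mkQ z₀} := by
        rintro p ⟨u, rfl, hu⟩
        have hunz : u ∉ orbit G z₀ := by
          intro hc
          apply hu
          simp only [hf'', if_pos hc]
        have hfu : f u ≠ u := by
          intro hc
          apply hu
          simp only [hf'', if_neg hunz]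
          exact hc
        refine ⟨⟨u, rfl, hfu⟩, ?_⟩
        simp only [Set.mem_singleton_iff, mkQ_eq_iff]
        exact hunz
      have hcard'' : (SS (G := G) f'').ncard ≤ n := by
        have h1 : (SS (G := G) f'').ncard ≤ (SS (G := G) f \ {mkQ z₀}).ncard :=
          Set.ncard_le_ncard hsub (Set.toFinite _)
        have h2 : (SS (G := G) f \ {(mkQ z₀ : Om G X)}).ncard = (SS (G := G) f).ncard - 1 :=
          Set.ncard_diff_singleton_of_mem ⟨z₀, rfl, hfz₀⟩
        omega
      rw [hfe]
      exact M.mul_mem (ih f'' hf''E hcard'') (helem z₀ (f z₀) (stab_le_stab_apply hf z₀))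
    · -- peel an automorphism rotating a cycle
      push_neg at hA
      obtain ⟨q₀, hq₀⟩ := Set.nonempty_iff_ne_empty.mpr hS
      set t : ℕ → Om G X := fun m => (phiQ hf)^[m] q₀ with ht
      have htS : ∀ m, t m ∈ SS (G := G) f := by
        intro m
        induction m with
        | zero => exact hq₀
        | succ m ihm =>
          have : t (m + 1) = phiQ hf (t m) := Function.iterate_succ_apply' _ m q₀
          rw [this]
          exact hA (t m) ihm
      obtain ⟨k, l, hkl, hkle⟩ := Finite.exists_ne_map_eq_of_infinite t
      wlog hlt : k < l generalizing k l
      · exact this l k (Ne.symm hkl) hkle.symm (by omega)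
      set d : ℕ := l - k with hd
      have hd1 : 1 ≤ d := by omega
      set Q₀ : Om G X := t k with hQ₀
      have hQd : (phiQ hf)^[d] Q₀ = Q₀ := by
        show (phiQ hf)^[d] ((phiQ hf)^[k] q₀) = (phiQ hf)^[k] q₀
        rw [← Function.iterate_add_apply]
        have : d + k = l := by omega
        rw [this]
        exact hkle.symm
      set C₀ : Set (Om G X) := Set.range (fun m => (phiQ hf)^[m] Q₀) with hC₀
      have hC₀per : ∀ P ∈ C₀, (phiQ hf)^[d] P = P := by
        rintro P ⟨m, rfl⟩
        show (phiQ hf)^[d] ((phiQ hf)^[m] Q₀) = _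
        rw [← Function.iterate_add_apply, Nat.add_comm, Function.iterate_add_apply, hQd]
      have hC₀maps : ∀ P ∈ C₀, phiQ hf P ∈ C₀ := by
        rintro P ⟨m, rfl⟩
        exact ⟨m + 1, Function.iterate_succ_apply' (phiQ hf) m Q₀⟩
      set U : Set X := {z | (mkQ z : Om G X) ∈ C₀} with hU
      have hUf : ∀ z ∈ U, f z ∈ U := by
        intro z hz
        show (mkQ (f z) : Om G X) ∈ C₀
        rw [← phiQ_mkQ hf]
        exact hC₀maps _ hz
      have hUstab : ∀ z ∈ U, stabilizer G (f z) = stabilizer G z := by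
        intro z hz
        have h1 : (mkQ (f^[d] z) : Om G X) = mkQ z := by
          rw [mkQ_iterate hf]
          exact hC₀per _ hz
        have h2 : f^[d] z ∈ orbit G z := mkQ_eq_iff.mp h1
        have hfd : (f ^ d : Function.End X) ∈ gEnd G X := Submonoid.pow_mem _ hf d
        have h3 : (f ^ d) '' (orbit G z) = orbit G z := by
          rw [image_orbit hfd z, end_pow_apply]
          exact orbit_eq_of_mem h2
        have hbij : Set.BijOn (f ^ d) (orbit G z) (orbit G z) := by
          refine ((Set.toFinite _).surjOn_iff_bijOn_of_mapsTo ?_).mp ?_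
          · intro u hu
            rw [← h3]; exact ⟨u, hu, rfl⟩
          · unfold Set.SurjOn; rw [h3]
        have h4 : stabilizer G ((f ^ d) z) = stabilizer G z :=
          stab_apply_eq_of_injOn hfd hbij.injOn
        have h5 : stabilizer G (f z) ≤ stabilizer G z := by
          rw [← h4, end_pow_apply]
          have : f^[d] z = f^[d-1] (f z) := by
            conv_lhs => rw [show d = (d - 1) + 1 by omega]
            rw [Function.iterate_succ_apply (f := f)]
          rw [this]
          exact stab_le_stab_iterate hf (d - 1) (f z)
        exact le_antisymm h5 (stab_le_stab_apply hf z)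
      have hUinj : Set.InjOn f U := by
        intro z₁ h₁ z₂ h₂ he
        have hphiinj : Set.InjOn (phiQ hf) C₀ := by
          have hsurj : Set.SurjOn (phiQ hf) C₀ C₀ := by
            rintro P ⟨m, rfl⟩
            refine ⟨(phiQ hf)^[m + (d-1)] Q₀, ⟨m + (d-1), rfl⟩, ?_⟩
            show phiQ hf ((phiQ hf)^[m + (d-1)] Q₀) = _
            have h9 : phiQ hf ((phiQ hf)^[m + (d-1)] Q₀) = (phiQ hf)^[m + (d-1) + 1] Q₀ :=
              (Function.iterate_succ_apply' _ _ _).symm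
            have heq : m + (d - 1) + 1 = m + d := by omega
            rw [h9, heq, Function.iterate_add_apply, hQd]
          exact (((Set.toFinite _).surjOn_iff_bijOn_of_mapsTo
            (fun P hP => hC₀maps P hP)).mp hsurj).injOn
        have h3 : (mkQ z₁ : Om G X) = mkQ z₂ := by
          apply hphiinj h₁ h₂
          rw [phiQ_mkQ hf, phiQ_mkQ hf, he]
        obtain ⟨g, rfl⟩ := mem_orbit_iff.mp (mkQ_eq_iff.mp h3)
        have h4 : f (g • z₂) = g • f z₂ := hf g z₂
        rw [h4] at he
        have h5 : g ∈ stabilizer G (f z₂) := he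
        rw [hUstab z₂ h₂] at h5
        have h6 : g • z₂ = z₂ := h5
        rw [h6]
      -- the rotating automorphism
      set a : Function.End X := fun z => if z ∈ U then f z else z with ha
      have haE : a ∈ gEnd G X := by
        intro g z
        have hUs : ∀ u : X, g • u ∈ U ↔ u ∈ U := by
          intro u
          show (mkQ (g • u) : Om G X) ∈ C₀ ↔ (mkQ u : Om G X) ∈ C₀
          rw [mkQ_eq_iff.mpr (mem_orbit u g)]
        by_cases hz : z ∈ U
        · simp only [ha, if_pos hz, if_pos ((hUs z).mpr hz)]
          exact hf g z
        · simp only [ha, if_neg hz, if_neg (fun hc => hz ((hUs z).mp hc))]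
      have hainj : Function.Injective a := by
        intro z₁ z₂ he
        by_cases h₁ : z₁ ∈ U <;> by_cases h₂ : z₂ ∈ U
        · simp only [ha, if_pos h₁, if_pos h₂] at he
          exact hUinj h₁ h₂ he
        · simp only [ha, if_pos h₁, if_neg h₂] at he
          exact absurd (he ▸ hUf z₁ h₁) h₂
        · simp only [ha, if_neg h₁, if_pos h₂] at he
          exact absurd (he ▸ hUf z₂ h₂) h₁
        · simpa [ha, if_neg h₁, if_neg h₂] using he
      have habij : Function.Bijective a := Finite.injective_iff_bijective.mp hainj
      set aPerm : Equiv.Perm X := Equiv.ofBijective a habij with haPerm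
      have haAut : (aPerm : X → X) ∈ autSet G X :=
        mem_autSet_iff.mpr ⟨haE, habij⟩
      set f₂ : Function.End X := fun z => if z ∈ U then z else f z with hf₂
      have hf₂E : f₂ ∈ gEnd G X := by
        intro g z
        have hUs : ∀ u : X, g • u ∈ U ↔ u ∈ U := by
          intro u
          show (mkQ (g • u) : Om G X) ∈ C₀ ↔ (mkQ u : Om G X) ∈ C₀
          rw [mkQ_eq_iff.mpr (mem_orbit u g)]
        by_cases hz : z ∈ U
        · simp only [hf₂, if_pos hz, if_pos ((hUs z).mpr hz)]
        · simp only [hf₂, if_neg hz, if_neg (fun hc => hz ((hUs z).mp hc))]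
          exact hf g z
      have hfe : f = f₂ * a := by
        funext z
        rw [end_mul_apply]
        show f z = f₂ (a z)
        by_cases hz : z ∈ U
        · simp only [ha, if_pos hz]
          simp only [hf₂, if_pos (hUf z hz)]
        · simp only [ha, if_neg hz]
          simp only [hf₂, if_neg hz]
      have hsub : SS (G := G) f₂ ⊆ SS (G := G) f \ {Q₀} := by
        rintro p ⟨u, rfl, hu⟩
        have hunU : u ∉ U := by
          intro hc
          apply hu
          simp only [hf₂, if_pos hc]
        have hfu : f u ≠ u := by
          intro hc
          apply hu
          simp only [hf₂, if_neg hunU]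
          exact hc
        refine ⟨⟨u, rfl, hfu⟩, ?_⟩
        simp only [Set.mem_singleton_iff]
        intro he
        exact hunU (by show (mkQ u : Om G X) ∈ C₀; rw [he]; exact ⟨0, rfl⟩)
      have hcard₂ : (SS (G := G) f₂).ncard ≤ n := by
        have h1 : (SS (G := G) f₂).ncard ≤ (SS (G := G) f \ {Q₀}).ncard :=
          Set.ncard_le_ncard hsub (Set.toFinite _)
        have h2 : (SS (G := G) f \ {Q₀}).ncard = (SS (G := G) f).ncard - 1 :=
          Set.ncard_diff_singleton_of_mem (htS k)
        omega
      rw [hfe]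
      exact M.mul_mem (ih f₂ hf₂E hcard₂) (hauts haAut)

end Upper

section StepB

variable {G X : Type*} [Group G] [MulAction G X]

open MulAction

lemma conjSub_mono {g : G} {K L : Subgroup G} (h : K ≤ L) : conjSub g K ≤ conjSub g L :=
  Subgroup.map_mono h

lemma stab_smul_inv (g : G) (z : X) :
    stabilizer G (g⁻¹ • z) = conjSub g⁻¹ (stabilizer G z) := stab_smul g⁻¹ z

/-- Rebasing an elementary map. -/
lemma elemFun_rebase {p q : X} (hpq : stabilizer G p ≤ stabilizer G q) (g : G) :
    elemFun G p q = elemFun G (g • p) (g • q) := by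
  have hle : stabilizer G (g • p) ≤ stabilizer G (g • q) := by
    rw [stab_smul, stab_smul]
    exact conjSub_mono hpq
  funext z
  by_cases hz : z ∈ orbit G p
  · obtain ⟨g₀, rfl⟩ := mem_orbit_iff.mp hz
    rw [elemFun_smul hpq]
    have : g₀ • p = (g₀ * g⁻¹) • (g • p) := by rw [mul_smul]; simp
    rw [this, elemFun_smul hle, mul_smul]
    simp
  · have hz' : z ∉ orbit G (g • p) := by
      intro hc
      rw [orbit_eq_of_mem (mem_orbit p g)] at hc
      exact hz hc
    rw [elemFun_of_not_mem hz, elemFun_of_not_mem hz']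

/-- Same-orbit elementary maps are automorphisms. -/
lemma elemFun_mem_autSet [Finite G] {x y : X} (hle : stabilizer G x ≤ stabilizer G y)
    (hyo : y ∈ orbit G x) : elemFun G x y ∈ autSet G X := by
  obtain ⟨g, hg⟩ := mem_orbit_iff.mp hyo
  have hsy : stabilizer G y = stabilizer G x := by
    have h1 : stabilizer G y = conjSub g (stabilizer G x) := by rw [← hg, stab_smul]
    exact eq_of_le_of_conj hle h1
  have heq : elemFun G x y = (swapPerm x y hsy.symm : X → X) := by
    funext z
    show _ = swapFun G x y z
    by_cases hz : z ∈ orbit G x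
    · simp only [elemFun, swapFun]
      rw [dif_pos hz, dif_pos hz]
    · have hz' : z ∉ orbit G y := by
        rw [orbit_eq_of_mem hyo]
        exact hz
      rw [elemFun_of_not_mem hz, swapFun_of_not_mem hz hz']
  rw [heq]
  exact coe_swapPerm_mem_autSet hsy.symm

/-- Conjugating an elementary map to a standard one. -/
lemma elem_conj {x y x₀ yh : X} {n : G}
    (hx : stabilizer G x = stabilizer G (n • x₀))
    (hy : stabilizer G y = stabilizer G (n • yh))
    (hxy : stabilizer G x₀ ≤ stabilizer G yh)
    (hyx : y ∉ orbit G x) (hyhx : yh ∉ orbit G x₀) :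
    ∃ b : Equiv.Perm X, b ∈ gAut G X ∧
      elemFun G x y = (show Function.End X from ⇑(b⁻¹)) * elemFun G x₀ yh *
        (show Function.End X from ⇑b) := by
  have hle : stabilizer G x ≤ stabilizer G y := by
    rw [hx, hy, stab_smul, stab_smul]
    exact conjSub_mono hxy
  have huv' : n • yh ∉ orbit G (n • x₀) := by
    intro hc
    rw [orbit_eq_of_mem (mem_orbit x₀ n)] at hc
    exact hyhx (smul_mem_orbit_iff.mp hc)
  obtain ⟨b, hbAut, hbx, hby⟩ := swap2 hx hy hyx huv'
  have hbE : ∀ (g : G) (w : X), b (g • w) = g • b w := hbAut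
  refine ⟨b, hbAut, ?_⟩
  funext z
  show elemFun G x y z = (b⁻¹ : Equiv.Perm X) (elemFun G x₀ yh (b z))
  by_cases hz : z ∈ orbit G x
  · obtain ⟨g, rfl⟩ := mem_orbit_iff.mp hz
    rw [elemFun_smul hle]
    have h1 : b (g • x) = g • (n • x₀) := by rw [hbE g x, hbx]
    have h2 : g • (n • x₀) = (g * n) • x₀ := (mul_smul g n x₀).symm
    have h3 : elemFun G x₀ yh ((g * n) • x₀) = (g * n) • yh := elemFun_smul hxy _
    rw [h1, h2, h3, mul_smul, ← hby, ← hbE g y]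
    exact (b.symm_apply_apply _).symm
  · have hbz : b z ∉ orbit G x₀ := by
      intro hc
      have h1 : b z ∈ orbit G (b x) := by
        rw [hbx, orbit_eq_of_mem (mem_orbit x₀ n)]
        exact hc
      obtain ⟨g, hg⟩ := mem_orbit_iff.mp h1
      have h2 : b (g • x) = b z := by rw [hbE g x]; exact hg
      have h3 : g • x = z := b.injective h2
      exact hz (h3 ▸ mem_orbit x g)
    rw [elemFun_of_not_mem hz, elemFun_of_not_mem hbz]
    exact (b.symm_apply_apply _).symm

end StepB

section Pairs

open MulAction

variable {G X : Type*} [Group G] [MulAction G X]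

/-- Generic sum-of-fibers cardinality lemma. -/
lemma ncard_sigma_like {α β : Type*} [Fintype α] [Finite β] (Q : α → Set β) :
    {p : α × β | p.2 ∈ Q p.1}.ncard = ∑ i, (Q i).ncard := by
  classical
  have : Fintype β := Fintype.ofFinite β
  rw [Set.ncard_eq_toFinset_card']
  rw [Finset.card_eq_sum_card_fiberwise (f := Prod.fst) (t := Finset.univ)
    (fun x _ => Finset.mem_univ _)]
  refine Finset.sum_congr rfl (fun i _ => ?_)
  rw [Set.ncard_eq_toFinset_card']
  refine Finset.card_bij (fun p _ => p.2) ?_ ?_ ?_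
  · intro p hp
    simp only [Finset.mem_filter, Set.mem_toFinset, Set.mem_setOf_eq] at hp
    rw [Set.mem_toFinset]
    exact hp.2 ▸ hp.1
  · intro p₁ h₁ p₂ h₂ he
    simp only [Finset.mem_filter, Set.mem_toFinset, Set.mem_setOf_eq] at h₁ h₂
    exact Prod.ext (h₁.2.trans h₂.2.symm) he
  · intro C hC
    rw [Set.mem_toFinset] at hC
    refine ⟨(i, C), ?_, rfl⟩
    simp only [Finset.mem_filter, Set.mem_toFinset, Set.mem_setOf_eq]
    exact ⟨hC, trivial⟩

variable {r : ℕ}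

/-- The set of generator-indexing pairs. -/
def PairSet (G X : Type*) [Group G] [MulAction G X] (H : Fin r → Subgroup G) :
    Set (Fin r × Set (Subgroup G)) :=
  {p | p.2 ∈ stabU G X (H p.1) ∧
    (p.2 = nConjClass (Subgroup.normalizer ((H p.1) : Set G)) (H p.1) →
      2 ≤ (classOrbits G X (H p.1)).ncard)}

variable {H : Fin r → Subgroup G}

lemma orbit_mem_classOrbits {i : Fin r} {x : X} (hx : stabilizer G x = H i) :
    orbit G x ∈ classOrbits G X (H i) :=
  ⟨x, ⟨1, by rw [conjSub_one]; exact hx⟩, rfl⟩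

/-- Construction of the target point of a witness for a pair. -/
lemma pair_witness [Finite G] [Finite X] {i : Fin r} {C : Set (Subgroup G)}
    (hp : (i, C) ∈ PairSet G X H) {x₀ : X} (hx₀ : stabilizer G x₀ = H i) :
    ∃ y : X, H i ≤ stabilizer G y ∧
      nConjClass (Subgroup.normalizer ((H i) : Set G)) (stabilizer G y) = C ∧ y ∉ orbit G x₀ := by
  have hC : C ∈ stabU G X (H i) := hp.1
  have hbase : C = nConjClass (Subgroup.normalizer ((H i) : Set G)) (H i) → 2 ≤ (classOrbits G X (H i)).ncard := hp.2
  by_cases hcb : C = nConjClass (Subgroup.normalizer ((H i) : Set G)) (H i)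
  · -- collapse pair: take a point in a different orbit of the same type
    have h2 : 2 ≤ (classOrbits G X (H i)).ncard := hbase hcb
    have hex : ∃ s ∈ classOrbits G X (H i), ∃ t ∈ classOrbits G X (H i), s ≠ t :=
      (Set.one_lt_ncard (Set.toFinite _)).mp h2
    obtain ⟨s, hs, t, ht, hst⟩ := hex
    have hone : ∃ s ∈ classOrbits G X (H i), s ≠ orbit G x₀ := by
      by_cases h : s = orbit G x₀
      · exact ⟨t, ht, fun hc => hst (h.trans hc.symm)⟩
      · exact ⟨s, hs, h⟩
    obtain ⟨s, hs, hsne⟩ := hone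
    obtain ⟨y'', ⟨g, hg⟩, rfl⟩ := hs
    refine ⟨g⁻¹ • y'', ?_, ?_, ?_⟩
    · rw [stab_smul_inv, hg, conjSub_conjSub]
      simp [conjSub_one]
    · rw [stab_smul_inv, hg, conjSub_conjSub]
      simp only [inv_mul_cancel]
      rw [conjSub_one]
      exact hcb.symm
    · intro hc
      apply hsne
      have h3 : g⁻¹ • y'' ∈ orbit G y'' := ⟨g⁻¹, rfl⟩
      rw [← orbit_eq_of_mem h3]
      exact orbit_eq_of_mem hc
  · -- jump pair: the given point works
    obtain ⟨y, hy, hyc⟩ := hC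
    refine ⟨y, hy, hyc.symm, ?_⟩
    intro hc
    obtain ⟨g, hg⟩ := stab_conj_of_mem_orbit hc
    rw [hx₀] at hg
    have h4 : stabilizer G y = H i := eq_of_le_of_conj hy hg
    exact hcb (by rw [hyc, h4])

/-- A witness endomorphism for each pair. -/
lemma wit_of_elem [Finite X] {x y : X} {K : Subgroup G} {C : Set (Subgroup G)}
    (hsx : stabilizer G x = K) (hyle : K ≤ stabilizer G y)
    (hcls : nConjClass (Subgroup.normalizer (K : Set G)) (stabilizer G y) = C)
    (hynx : y ∉ orbit G x) :
    Wit (elemFun G x y) x K C := by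
  have hle : stabilizer G x ≤ stabilizer G y := hsx ▸ hyle
  have happ : elemFun G x y x = y := elemFun_apply_self hle
  refine ⟨hsx, by rw [happ]; exact hcls, ?_, ?_, ?_⟩
  · by_cases hK : stabilizer G y = K
    · intro hinj
      have h1 : elemFun G x y y = y := elemFun_of_not_mem hynx
      have h2 : elemFun G x y x = elemFun G x y y := by rw [happ, h1]
      have h3 : x = y := hinj h2
      exact hynx (h3 ▸ mem_orbit_self x)
    · have hlt : K < stabilizer G y := lt_of_le_of_ne hyle (fun hc => hK hc.symm)
      obtain ⟨h, hhy, hhK⟩ := SetLike.exists_of_lt hlt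
      intro hinj
      have h1 : elemFun G x y (h • x) = h • y := elemFun_smul hle h
      have h2 : h • y = y := hhy
      have h3 : elemFun G x y (h • x) = elemFun G x y x := by rw [h1, h2, happ]
      have h4 : h • x = x := hinj h3
      exact hhK (hsx ▸ mem_stabilizer_iff.mpr h4)
  · intro z₁ h₁ z₂ h₂ he
    rw [elemFun_of_not_mem h₁, elemFun_of_not_mem h₂] at he
    exact he
  · intro z hz
    rw [elemFun_of_not_mem hz]

end Pairs

section Bounds

open MulAction

variable {G X : Type*} [Group G] [MulAction G X] [Finite G] [Finite X]
variable {r : ℕ} {H : Fin r → Subgroup G}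

lemma lower_bound
    (hH1 : ∀ i, ∃ x : X, MulAction.stabilizer G x = H i)
    (hH2 : ∀ x : X, ∃! i, ∃ g : G, MulAction.stabilizer G x = conjSub g (H i))
    {W : Finset (Function.End X)}
    (hcl : Submonoid.closure (↑W ∪ autSet G X) = gEnd G X) :
    (PairSet G X H).ncard ≤ W.card := by
  classical
  have hWE : (W : Set (Function.End X)) ⊆ (gEnd G X : Set (Function.End X)) := by
    intro w hw
    rw [← hcl]
    exact Submonoid.subset_closure (Or.inl hw)
  have hserve : ∀ p ∈ PairSet G X H, ∃ w ∈ W, Serve (H p.1) p.2 w := by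
    rintro ⟨i, C⟩ hp
    obtain ⟨x₀, hx₀⟩ := hH1 i
    obtain ⟨y, hyle, hycls, hynx⟩ := pair_witness hp hx₀
    have hwit : Wit (elemFun G x₀ y) x₀ (H i) C := wit_of_elem hx₀ hyle hycls hynx
    have hmem : elemFun G x₀ y ∈ gEnd G X := elemFun_mem_gEnd (hx₀ ▸ hyle)
    rw [← hcl] at hmem
    obtain ⟨L, hL, hLp⟩ := Submonoid.exists_list_of_mem_closure hmem
    exact exists_serve_of_list hWE L hL x₀ (H i) C (by rw [hLp]; exact hwit)
  set pk : Fin r × Set (Subgroup G) → Function.End X := fun p =>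
    if hp : p ∈ PairSet G X H then (hserve p hp).choose else 1 with hpk
  have hpkW : ∀ p ∈ PairSet G X H, pk p ∈ W ∧ Serve (H p.1) p.2 (pk p) := by
    intro p hp
    simp only [hpk, dif_pos hp]
    exact ⟨(hserve p hp).choose_spec.1, (hserve p hp).choose_spec.2⟩
  have hinj : Set.InjOn pk (PairSet G X H) := by
    intro p₁ h₁ p₂ h₂ he
    obtain ⟨-, hs₁⟩ := hpkW p₁ h₁
    obtain ⟨-, hs₂⟩ := hpkW p₂ h₂
    rw [he] at hs₁
    obtain ⟨hi, hC⟩ := serve_exclusive hH1 hH2 hs₁ hs₂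
    exact Prod.ext hi hC
  calc (PairSet G X H).ncard = (pk '' PairSet G X H).ncard :=
        (Set.ncard_image_of_injOn hinj).symm
  _ ≤ (↑W : Set (Function.End X)).ncard := by
      refine Set.ncard_le_ncard ?_ (W.finite_toSet)
      rintro _ ⟨p, hp, rfl⟩
      exact (hpkW p hp).1
  _ = W.card := Set.ncard_coe_finset W

lemma upper_bound
    (hH1 : ∀ i, ∃ x : X, MulAction.stabilizer G x = H i)
    (hH2 : ∀ x : X, ∃! i, ∃ g : G, MulAction.stabilizer G x = conjSub g (H i)) :
    ∃ W₀ : Finset (Function.End X), W₀.card ≤ (PairSet G X H).ncard ∧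
      Submonoid.closure (↑W₀ ∪ autSet G X) = gEnd G X := by
  classical
  set x₀ : Fin r → X := fun i => (hH1 i).choose with hx₀def
  have hx₀ : ∀ i, stabilizer G (x₀ i) = H i := fun i => (hH1 i).choose_spec
  set yc : Fin r × Set (Subgroup G) → X := fun p =>
    if hp : p ∈ PairSet G X H then (pair_witness hp (hx₀ p.1)).choose else x₀ p.1 with hyc
  have hycspec : ∀ p (hp : p ∈ PairSet G X H),
      H p.1 ≤ stabilizer G (yc p) ∧
      nConjClass (Subgroup.normalizer ((H p.1) : Set G)) (stabilizer G (yc p)) = p.2 ∧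
      yc p ∉ orbit G (x₀ p.1) := by
    intro p hp
    simp only [hyc, dif_pos hp]
    exact (pair_witness hp (hx₀ p.1)).choose_spec
  set wit : Fin r × Set (Subgroup G) → Function.End X := fun p =>
    elemFun G (x₀ p.1) (yc p) with hwitdef
  set W₀ : Finset (Function.End X) :=
    ((PairSet G X H).toFinite.toFinset).image wit with hW₀
  refine ⟨W₀, ?_, ?_⟩
  · calc W₀.card ≤ ((PairSet G X H).toFinite.toFinset).card := Finset.card_image_le
    _ = (PairSet G X H).ncard := (Set.ncard_eq_toFinset_card _ _).symm
  · set M := Submonoid.closure ((W₀ : Set (Function.End X)) ∪ autSet G X) with hM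
    have hauts : autSet G X ⊆ (M : Set (Function.End X)) :=
      fun a ha => Submonoid.subset_closure (Or.inr ha)
    have hWM : ∀ p ∈ PairSet G X H, wit p ∈ M := by
      intro p hp
      refine Submonoid.subset_closure (Or.inl ?_)
      rw [hW₀]
      exact Finset.mem_image_of_mem wit ((Set.Finite.mem_toFinset _).mpr hp)
    apply le_antisymm
    · refine Submonoid.closure_le.mpr ?_
      rintro w (hw | hw)
      · rw [hW₀] at hw
        obtain ⟨p, hp, rfl⟩ := Finset.mem_image.mp hw
        have hp' := (Set.Finite.mem_toFinset _).mp hp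
        exact elemFun_mem_gEnd ((hx₀ p.1) ▸ (hycspec p hp').1)
      · exact autSet_subset_gEnd hw
    · intro f hf
      refine mem_of_elem_mem hauts ?_ (SS (G := G) f).ncard f hf le_rfl
      -- all elementary maps lie in M
      intro p q hpq
      obtain ⟨i, ⟨g, hg⟩, -⟩ := hH2 p
      have hxs : stabilizer G (g⁻¹ • p) = H i := by
        rw [stab_smul_inv, hg, conjSub_conjSub]
        simp [conjSub_one]
      have hys : stabilizer G (g⁻¹ • p) ≤ stabilizer G (g⁻¹ • q) := by
        rw [stab_smul_inv, stab_smul_inv]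
        exact conjSub_mono hpq
      have hre : elemFun G p q = elemFun G (g⁻¹ • p) (g⁻¹ • q) := elemFun_rebase hpq g⁻¹
      rw [hre]
      set x := g⁻¹ • p
      set y := g⁻¹ • q
      by_cases hyo : y ∈ orbit G x
      · exact hauts (elemFun_mem_autSet hys hyo)
      · -- use the generator for the pair (i, C)
        set C : Set (Subgroup G) := nConjClass (Subgroup.normalizer ((H i) : Set G)) (stabilizer G y) with hC
        have hCU : C ∈ stabU G X (H i) := ⟨y, hxs ▸ hys, rfl⟩
        have hpP : (i, C) ∈ PairSet G X H := by
          refine ⟨hCU, ?_⟩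
          intro hcb
          -- then stab y = H i and we have two orbits of type H i
          have h1 : ∃ n ∈ (Subgroup.normalizer ((H i) : Set G)), stabilizer G y = conjSub n (H i) :=
            nConjClass_eq_iff.mp hcb
          obtain ⟨n, hn, hsy⟩ := h1
          have h2 : stabilizer G y = H i := by
            rw [hsy, conjSub_of_mem_normalizer hn]
          have h3 : orbit G x ∈ classOrbits G X (H i) := orbit_mem_classOrbits hxs
          have h4 : orbit G y ∈ classOrbits G X (H i) := orbit_mem_classOrbits h2
          refine (Set.one_lt_ncard (Set.toFinite _)).mpr ⟨orbit G x, h3, orbit G y, h4, ?_⟩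
          intro he
          exact hyo (by rw [he]; exact mem_orbit_self y)
        obtain ⟨hyle', hycls', hynx'⟩ := hycspec (i, C) hpP
        -- choose n conjugating the stabilizers
        have h5 : nConjClass (Subgroup.normalizer ((H i) : Set G)) (stabilizer G y) =
            nConjClass (Subgroup.normalizer ((H i) : Set G)) (stabilizer G (yc (i, C))) := by
          rw [hycls']
        obtain ⟨n, hn, hny⟩ := nConjClass_eq_iff.mp h5
        have hnx : stabilizer G x = stabilizer G (n • x₀ i) := by
          rw [stab_smul n (x₀ i), hx₀ i, conjSub_of_mem_normalizer hn, hxs]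
        have hnyy : stabilizer G y = stabilizer G (n • yc (i, C)) := by
          rw [stab_smul n (yc (i, C))]
          exact hny
        have hx₀le : stabilizer G (x₀ i) ≤ stabilizer G (yc (i, C)) := (hx₀ i) ▸ hyle'
        obtain ⟨b, hbA, hbeq⟩ := elem_conj hnx hnyy hx₀le hyo hynx'
        rw [hbeq]
        refine M.mul_mem (M.mul_mem ?_ ?_) ?_
        · exact hauts ⟨b⁻¹, (gAut G X).inv_mem hbA, rfl⟩
        · exact hWM (i, C) hpP
        · exact hauts ⟨b, hbA, rfl⟩

end Bounds

/-- **Main theorem.**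
`Rank(End_G(X) : Aut_G(X)) = Σᵢ |U(Hᵢ)| − κ_G(X)`. -/
theorem stmt16 {G X : Type*} [Group G] [MulAction G X] [Finite G] [Finite X]
    (r : ℕ) (H : Fin r → Subgroup G)
    (hH1 : ∀ i, ∃ x : X, MulAction.stabilizer G x = H i)
    (hH2 : ∀ x : X, ∃! i, ∃ g : G, MulAction.stabilizer G x = conjSub g (H i))
    :
    relRank (gEnd G X) (autSet G X) =
      (∑ i, (stabU G X (H i)).ncard) -
      Set.ncard {i : Fin r | (classOrbits G X (H i)).ncard = 1} := by
  classical
  open MulAction in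
  set NN := (PairSet G X H).ncard with hNN
  obtain ⟨W₀, hW₀c, hW₀cl⟩ := upper_bound hH1 hH2
  have hW₀ge : NN ≤ W₀.card := lower_bound hH1 hH2 hW₀cl
  have hcard : W₀.card = NN := le_antisymm hW₀c hW₀ge
  have hmem : NN ∈ {n : ℕ | ∃ W : Finset (Function.End X), W.card = n ∧
      Submonoid.closure (↑W ∪ autSet G X) = gEnd G X} := ⟨W₀, hcard, hW₀cl⟩
  have hrel : relRank (gEnd G X) (autSet G X) = NN := by
    refine le_antisymm (Nat.sInf_le hmem) (le_csInf ⟨NN, hmem⟩ ?_)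
    rintro n ⟨W, rfl, hWcl⟩
    exact lower_bound hH1 hH2 hWcl
  rw [hrel]
  -- arithmetic
  set m : Fin r → ℕ := fun i => (classOrbits G X (H i)).ncard with hm
  set base : Fin r → Set (Subgroup G) :=
    fun i => nConjClass (Subgroup.normalizer ((H i) : Set G)) (H i) with hbase
  set Q : Fin r → Set (Set (Subgroup G)) :=
    fun i => {C | C ∈ stabU G X (H i) ∧ (C = base i → 2 ≤ m i)} with hQ
  have hsig : NN = ∑ i, (Q i).ncard := by
    rw [hNN]
    have : PairSet G X H = {p : Fin r × Set (Subgroup G) | p.2 ∈ Q p.1} := rfl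
    rw [this]
    exact ncard_sigma_like Q
  have hbase_mem : ∀ i, base i ∈ stabU G X (H i) := by
    intro i
    obtain ⟨x, hx⟩ := hH1 i
    exact ⟨x, le_of_eq hx.symm, by rw [hx]⟩
  have hm1 : ∀ i, 1 ≤ m i := by
    intro i
    obtain ⟨x, hx⟩ := hH1 i
    have h0 : (classOrbits G X (H i)).Nonempty := ⟨orbit G x, orbit_mem_classOrbits hx⟩
    have h2 : 0 < m i := (Set.ncard_pos (Set.toFinite _)).mpr h0
    omega
  have hQcard : ∀ i, (Q i).ncard = (stabU G X (H i)).ncard - (if m i = 1 then 1 else 0) := by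
    intro i
    by_cases h1 : m i = 1
    · have hQe : Q i = stabU G X (H i) \ {base i} := by
        ext C
        simp only [hQ, Set.mem_setOf_eq, Set.mem_diff, Set.mem_singleton_iff]
        constructor
        · rintro ⟨hC, hcb⟩
          refine ⟨hC, fun he => ?_⟩
          have := hcb he
          omega
        · rintro ⟨hC, hne⟩
          exact ⟨hC, fun he => absurd he hne⟩
      rw [hQe, if_pos h1]
      exact Set.ncard_diff_singleton_of_mem (hbase_mem i)
    · have hQe : Q i = stabU G X (H i) := by
        ext C
        simp only [hQ, Set.mem_setOf_eq]
        constructor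
        · exact fun h => h.1
        · intro h
          refine ⟨h, fun _ => ?_⟩
          have := hm1 i
          omega
      rw [hQe, if_neg h1]
      simp
  have hkappa : Set.ncard {i : Fin r | (classOrbits G X (H i)).ncard = 1} =
      ∑ i, (if m i = 1 then 1 else 0) := by
    rw [Set.ncard_eq_toFinset_card', Set.toFinset_setOf]
    exact Finset.card_filter _ _
  have hle : ∀ i ∈ Finset.univ, (if m i = 1 then 1 else 0) ≤ (stabU G X (H i)).ncard := by
    intro i _
    have h0 : (stabU G X (H i)).Nonempty := ⟨base i, hbase_mem i⟩
    have h2 : 0 < (stabU G X (H i)).ncard := (Set.ncard_pos (Set.toFinite _)).mpr h0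
    split <;> omega
  rw [hsig, hkappa]
  rw [Finset.sum_congr rfl (fun i _ => hQcard i)]
  exact Finset.sum_tsub_distrib Finset.univ hle
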